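/- Let (X, μ) be a measure space, let U_n, U : X → ℝ be measurable functions such that U_n → U in measure (for every ε > 0, μ({|U_n − U| > ε}) → 0), and let (p_n) be a sequence in [1,∞) converging to p ∈ [1,∞). Then sup_{t>0} t^p · μ({x : |U(x)| > t}) ≤ liminf_{n→∞} sup_{t>0} t^{p_n} · μ({x : |U_n(x)| > t}). -/

import Mathlib

open MeasureTheory Filter ENNReal
open scoped Topology

/-- Lemma 5.11 of the paper: lower semicontinuity of the weak-`L^p` (Marcinkiewicz)
quasinorm under convergence in measure with varying exponents. -/
theorem marcinkiewicz_lsc {X : Type*} [MeasurableSpace X] (μ : Measure X)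
    (Un : ℕ → X → ℝ) (U : X → ℝ)
    (hUn : ∀ n, Measurable (Un n)) (hU : Measurable U)
    (hmeas : ∀ ε : ℝ, 0 < ε →
      Tendsto (fun n => μ {x | ε < |Un n x - U x|}) atTop (nhds 0))
    (p : ℕ → ℝ) (q : ℝ) (hp : ∀ n, 1 ≤ p n) (hq : 1 ≤ q)
    (hpq : Tendsto p atTop (nhds q)) :
    (⨆ t ∈ Set.Ioi (0:ℝ), ENNReal.ofReal (t ^ q) * μ {x | t < |U x|}) ≤
      liminf (fun n =>
        ⨆ t ∈ Set.Ioi (0:ℝ), ENNReal.ofReal (t ^ p n) * μ {x | t < |Un n x|}) atTop := by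
  set L := liminf (fun n =>
      ⨆ t ∈ Set.Ioi (0:ℝ), ENNReal.ofReal (t ^ p n) * μ {x | t < |Un n x|}) atTop with hL
  refine iSup₂_le fun t ht => ?_
  rw [Set.mem_Ioi] at ht
  set m := μ {x | t < |U x|} with hm
  -- Step 1: for each 0 < s < t, `ofReal (s ^ q) * m ≤ L`.
  have key : ∀ s ∈ Set.Ioo (0:ℝ) t, ENNReal.ofReal (s ^ q) * m ≤ L := by
    rintro s ⟨hs0, hst⟩
    -- subadditivity estimate
    have hsub : ∀ n, m ≤ μ {x | s < |Un n x|} + μ {x | (t - s) < |Un n x - U x|} := by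
      intro n
      refine le_trans (measure_mono ?_) (measure_union_le _ _)
      intro x hx
      simp only [Set.mem_setOf_eq] at hx
      by_cases h : t - s < |Un n x - U x|
      · exact Or.inr h
      · push_neg at h
        have h2 : |U x| - |Un n x| ≤ |U x - Un n x| := abs_sub_abs_le_abs_sub _ _
        rw [abs_sub_comm] at h2
        exact Or.inl (by simp only [Set.mem_setOf_eq]; linarith)
    -- convergence in measure part
    have hA : m ≤ liminf (fun n => μ {x | s < |Un n x|}) atTop := by
      rw [le_liminf_iff]
      intro b hb
      have hts : (0:ℝ) < t - s := by linarith
      have hpos : (0:ℝ≥0∞) < m - b := tsub_pos_iff_lt.2 hb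
      filter_upwards [(hmeas (t - s) hts).eventually_lt_const hpos] with n hn
      by_contra h
      push_neg at h
      have h1 : m ≤ b + μ {x | (t - s) < |Un n x - U x|} :=
        (hsub n).trans (add_le_add_left h _)
      have h2 : b + μ {x | (t - s) < |Un n x - U x|} < b + (m - b) :=
        ENNReal.add_lt_add_left hb.ne_top hn
      rw [add_tsub_cancel_of_le hb.le] at h2
      exact absurd (h1.trans_lt h2) (lt_irrefl m)
    -- convergence of coefficients
    have hc : Tendsto (fun n => ENNReal.ofReal (s ^ p n)) atTop
        (nhds (ENNReal.ofReal (s ^ q))) :=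
      (ENNReal.continuous_ofReal.tendsto _).comp
        (Filter.Tendsto.rpow tendsto_const_nhds hpq (Or.inl hs0.ne'))
    calc ENNReal.ofReal (s ^ q) * m
        ≤ ENNReal.ofReal (s ^ q) * liminf (fun n => μ {x | s < |Un n x|}) atTop :=
          mul_le_mul_right hA _
      _ = liminf (fun n => ENNReal.ofReal (s ^ p n)) atTop *
            liminf (fun n => μ {x | s < |Un n x|}) atTop := by rw [hc.liminf_eq]
      _ ≤ liminf ((fun n => ENNReal.ofReal (s ^ p n)) *
            (fun n => μ {x | s < |Un n x|})) atTop := ENNReal.le_liminf_mul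
      _ ≤ L := by
          refine liminf_le_liminf (Eventually.of_forall fun n => ?_)
          exact le_biSup (fun t => ENNReal.ofReal (t ^ p n) * μ {x | t < |Un n x|})
            (Set.mem_Ioi.2 hs0)
  -- Step 2: let `s → t` from the left.
  have hne : (𝓝[<] t).NeBot := nhdsLT_neBot t
  have htend : Tendsto (fun s : ℝ => ENNReal.ofReal (s ^ q) * m) (𝓝[<] t)
      (nhds (ENNReal.ofReal (t ^ q) * m)) := by
    refine ENNReal.Tendsto.mul_const ?_
      (Or.inl (ENNReal.ofReal_pos.2 (Real.rpow_pos_of_pos ht q)).ne')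
    exact (ENNReal.continuous_ofReal.tendsto _).comp
      (((Real.continuousAt_rpow_const t q (Or.inl ht.ne')).tendsto).mono_left
        nhdsWithin_le_nhds)
  refine le_of_tendsto htend ?_
  filter_upwards [Ioo_mem_nhdsLT ht] with s hs using key s hs
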